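/- Let W be a density matrix (symmetric positive semidefinite with Tr W = 1) whose eigenvalues are all at most 1/(n−k) for some 1 ≤ k < n. Then the eigenvalue vector w of W lies in the capped simplex B = {q ∈ ℝⁿ : qᵢ ≥ 0, ∑qᵢ = 1, qᵢ ≤ 1/(n−k)}, and conversely any q ∈ B can be written as a convex combination of at most n 'corner' vectors, each corner having exactly n−k nonzero entries all equal to 1/(n−k). -/

import Mathlib

open Matrix Finset

set_option maxHeartbeats 1000000 in
lemma capped_key (n d : ℕ) (hd : 0 < d) :
    ∀ t : ℕ, ∀ q : Fin n → ℝ,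
    (Finset.univ.filter (fun i => 0 < q i ∧ q i < 1 / (d:ℝ))).card = t →
    (∀ i, 0 ≤ q i) → (∑ i, q i = 1) → (∀ i, q i ≤ 1 / (d:ℝ)) →
    ∃ m : ℕ, m ≤ max 1 t ∧ ∃ (p : Fin m → ℝ) (r : Fin m → Fin n → ℝ),
      (∀ j, 0 ≤ p j) ∧ (∑ j, p j = 1) ∧
      (∀ j, ∃ S : Finset (Fin n), S.card = d ∧
        ∀ i, r j i = if i ∈ S then 1 / (d:ℝ) else 0) ∧
      q = ∑ j, p j • r j := by
  have hdR : (0:ℝ) < d := by exact_mod_cast hd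
  set c : ℝ := 1 / (d:ℝ) with hc_def
  have hc : 0 < c := by positivity
  have hcd : c * d = 1 := by rw [hc_def]; field_simp
  intro t
  induction t using Nat.strong_induction_on with
  | _ t IH =>
  intro q hT h0 h1 h2
  set T := Finset.univ.filter (fun i => 0 < q i ∧ q i < c) with hT_def
  set Fl := Finset.univ.filter (fun i => q i = c) with hFl_def
  have hdisj : Disjoint Fl T := by
    rw [Finset.disjoint_filter]
    rintro i _ hi ⟨_, h2i⟩
    exact absurd hi (ne_of_lt h2i)
  have hzero : ∀ i, i ∉ Fl → i ∉ T → q i = 0 := by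
    intro i hiF hiT
    rcases eq_or_lt_of_le (h0 i) with h | h
    · exact h.symm
    rcases eq_or_lt_of_le (h2 i) with h' | h'
    · exact absurd (by simp [hFl_def, h']) hiF
    · exact absurd (by simp [hT_def, h, h']) hiT
  have hsumFT : ∑ i ∈ Fl ∪ T, q i = 1 := by
    rw [← h1]
    exact Finset.sum_subset (Finset.subset_univ _) (fun i _ hi => by
      rw [Finset.mem_union] at hi; push_neg at hi
      exact hzero i hi.1 hi.2)
  have hsumFl : ∑ i ∈ Fl, q i = Fl.card * c := by
    rw [Finset.sum_congr rfl (fun i hi => (Finset.mem_filter.mp hi).2)]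
    simp [mul_comm]
    exact Or.inl rfl
  have hsplit : (Fl.card : ℝ) * c + ∑ i ∈ T, q i = 1 := by
    rw [← hsumFl, ← Finset.sum_union hdisj]; exact hsumFT
  by_cases hTe : T = ∅
  · -- base case: no fractional entries
    set S := Finset.univ.filter (fun i => q i ≠ 0) with hS_def
    have hSF : S = Fl := by
      ext i
      simp only [hS_def, hFl_def, Finset.mem_filter, Finset.mem_univ, true_and]
      constructor
      · intro h
        by_contra hne
        exact h (hzero i (by simp [hFl_def, hne]) (by simp [hTe]))
      · intro h; rw [h]; exact ne_of_gt hc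
    have hcard : (Fl.card : ℝ) = d := by
      have h' : (Fl.card : ℝ) * c = 1 := by
        have := hsplit; rw [hTe] at this; simpa using this
      have h'' : (Fl.card : ℝ) * c = (d:ℝ) * c := by rw [h', mul_comm (d:ℝ) c, hcd]
      exact mul_right_cancel₀ (ne_of_gt hc) h''
    have hScard : S.card = d := by
      rw [hSF]; exact_mod_cast hcard
    refine ⟨1, by omega, fun _ => 1, fun _ i => if i ∈ S then c else 0,
      fun _ => zero_le_one, by simp, fun _ => ⟨S, hScard, fun _ => rfl⟩, ?_⟩
    funext i
    simp only [Finset.sum_const, Finset.card_univ, Fintype.card_fin, one_smul]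
    by_cases hiS : i ∈ S
    · have : q i = c := by
        have hiF : i ∈ Fl := hSF ▸ hiS
        exact (Finset.mem_filter.mp hiF).2
      simp [hiS, this]
    · have : q i = 0 := by
        simp only [hS_def, Finset.mem_filter, Finset.mem_univ, true_and, not_not] at hiS
        exact hiS
      simp [hiS, this]
  · -- inductive step
    have hTne : T.Nonempty := Finset.nonempty_iff_ne_empty.mpr hTe
    have hTfrac : ∀ i ∈ T, 0 < q i ∧ q i < c := fun i hi => (Finset.mem_filter.mp hi).2
    have hTpos : 0 < ∑ i ∈ T, q i := Finset.sum_pos (fun i hi => (hTfrac i hi).1) hTne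
    have hTub : ∑ i ∈ T, q i < T.card * c := by
      calc ∑ i ∈ T, q i < ∑ _i ∈ T, c :=
            Finset.sum_lt_sum_of_nonempty hTne (fun i hi => (hTfrac i hi).2)
        _ = T.card * c := by simp [mul_comm]
    have hfd : Fl.card < d := by
      have : (Fl.card : ℝ) * c < (d:ℝ) * c := by
        rw [mul_comm (d:ℝ) c, hcd]; linarith
      exact_mod_cast lt_of_mul_lt_mul_right this hc.le
    have hdfT : d - Fl.card ≤ T.card := by
      have hcast : ((d - Fl.card : ℕ) : ℝ) = (d:ℝ) - Fl.card := by
        rw [Nat.cast_sub hfd.le]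
      have : ((d - Fl.card : ℕ) : ℝ) * c < (T.card : ℝ) * c := by
        rw [hcast]
        have : ((d:ℝ) - Fl.card) * c = 1 - Fl.card * c := by
          rw [sub_mul, mul_comm (d:ℝ) c, hcd]
        rw [this]; linarith
      have := lt_of_mul_lt_mul_right this hc.le
      exact_mod_cast this.le
    obtain ⟨U, hUT, hUcard⟩ := Finset.exists_subset_card_eq (s := T) (n := d - Fl.card) hdfT
    have hUfrac : ∀ i ∈ U, 0 < q i ∧ q i < c := fun i hi => hTfrac i (hUT hi)
    have hdisjFU : Disjoint Fl U := hdisj.mono_right hUT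
    set S := Fl ∪ U with hS_def
    have hScard : S.card = d := by
      rw [hS_def, Finset.card_union_of_disjoint hdisjFU, hUcard]; omega
    -- the step size
    set g : Fin n → ℝ := fun i => if i ∈ U then q i * d else (c - q i) * d with hg_def
    obtain ⟨i₀, hi₀T, hmin⟩ := T.exists_min_image g hTne
    set lam := g i₀ with hlam_def
    have hgpos : ∀ j ∈ T, 0 < g j := by
      intro j hj
      by_cases hjU : j ∈ U
      · simp only [hg_def, hjU, if_pos]
        exact mul_pos (hTfrac j hj).1 hdR
      · simp only [hg_def, hjU, if_neg, not_false_iff]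
        exact mul_pos (by linarith [(hTfrac j hj).2]) hdR
    have hlampos : 0 < lam := hgpos i₀ hi₀T
    have hlamlt1 : lam < 1 := by
      rcases (hTfrac i₀ hi₀T) with ⟨hq0, hqc⟩
      by_cases hU : i₀ ∈ U
      · simp only [hlam_def, hg_def, hU, if_pos]
        nlinarith
      · simp only [hlam_def, hg_def, hU, if_neg, not_false_iff]
        nlinarith
    have h1lam : 0 < 1 - lam := by linarith
    set r0 : Fin n → ℝ := fun i => if i ∈ S then c else 0 with hr0_def
    set q' : Fin n → ℝ := fun i => (q i - lam * r0 i) / (1 - lam) with hq'_def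
    -- bounds on q'
    have hlam_le_U : ∀ i ∈ U, lam * c ≤ q i := by
      intro i hi
      have := hmin i (hUT hi)
      simp only [hg_def, hi, if_pos] at this
      nlinarith
    have hlam_le_TU : ∀ i ∈ T, i ∉ U → q i ≤ c * (1 - lam) := by
      intro i hiT hiU
      have := hmin i hiT
      simp only [hg_def, hiU, if_neg, not_false_iff] at this
      nlinarith
    have h0' : ∀ i, 0 ≤ q' i := by
      intro i
      apply div_nonneg _ h1lam.le
      by_cases hiS : i ∈ S
      · simp only [hr0_def, hiS, if_pos]
        rcases Finset.mem_union.mp hiS with hiF | hiU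
        · have : q i = c := (Finset.mem_filter.mp hiF).2
          nlinarith
        · linarith [hlam_le_U i hiU]
      · simp only [hr0_def, hiS, if_neg, not_false_iff]
        simpa using h0 i
    have h2' : ∀ i, q' i ≤ c := by
      intro i
      rw [hq'_def, div_le_iff₀ h1lam]
      by_cases hiS : i ∈ S
      · simp only [hr0_def, hiS, if_pos]
        nlinarith [h2 i]
      · simp only [hr0_def, hiS, if_neg, not_false_iff, mul_zero, sub_zero]
        by_cases hiT : i ∈ T
        · have hiU : i ∉ U := fun h => hiS (Finset.mem_union_right _ h)
          have := hlam_le_TU i hiT hiU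
          linarith [this]
        · have hiF : i ∉ Fl := fun h => hiS (Finset.mem_union_left _ h)
          rw [hzero i hiF hiT]
          nlinarith
    have hsum_r0 : ∑ i, r0 i = 1 := by
      rw [hr0_def]
      rw [Finset.sum_ite_mem, Finset.univ_inter, Finset.sum_const, hScard, nsmul_eq_mul]
      rw [mul_comm]; exact hcd
    have h1' : ∑ i, q' i = 1 := by
      rw [hq'_def]
      rw [← Finset.sum_div, Finset.sum_sub_distrib, ← Finset.mul_sum, h1, hsum_r0, mul_one]
      field_simp
    -- fractional set shrinks
    set T' := Finset.univ.filter (fun i => 0 < q' i ∧ q' i < c) with hT'_def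
    have hT'sub : T' ⊆ T := by
      intro i hi
      rcases (Finset.mem_filter.mp hi).2 with ⟨hl, hr⟩
      by_contra hiT
      by_cases hiF : i ∈ Fl
      · have hq : q i = c := (Finset.mem_filter.mp hiF).2
        have hiS : i ∈ S := Finset.mem_union_left _ hiF
        have : q' i = c := by
          rw [hq'_def]
          simp only [hr0_def, hiS, if_pos, hq]
          field_simp
        rw [this] at hr; exact absurd hr (lt_irrefl c)
      · have hq : q i = 0 := hzero i hiF hiT
        have hiS : i ∉ S := by
          intro h
          rcases Finset.mem_union.mp h with h' | h'
          · exact hiF h'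
          · exact hiT (hUT h')
        have : q' i = 0 := by
          rw [hq'_def]; simp [hr0_def, hiS, hq]
        rw [this] at hl; exact absurd hl (lt_irrefl 0)
    have hi₀T' : i₀ ∉ T' := by
      intro h
      rcases (Finset.mem_filter.mp h).2 with ⟨hl, hr⟩
      by_cases hU : i₀ ∈ U
      · have hlam : lam = q i₀ * d := by simp only [hlam_def, hg_def, hU, if_pos]
        have hiS : i₀ ∈ S := Finset.mem_union_right _ hU
        have : q' i₀ = 0 := by
          rw [hq'_def]
          simp only [hr0_def, hiS, if_pos]
          rw [hlam]
          have : q i₀ - q i₀ * ↑d * c = 0 := by nlinarith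
          rw [this, zero_div]
        rw [this] at hl; exact absurd hl (lt_irrefl 0)
      · have hlam : lam = (c - q i₀) * d := by
          simp only [hlam_def, hg_def, hU, if_neg, not_false_iff]
        have hiF : i₀ ∉ Fl := Finset.disjoint_right.mp hdisj hi₀T
        have hiS : i₀ ∉ S := by
          intro h'
          rcases Finset.mem_union.mp h' with h'' | h''
          · exact hiF h''
          · exact hU h''
        have h1ml : 1 - lam = q i₀ * d := by rw [hlam]; nlinarith
        have hq0 : 0 < q i₀ := (hTfrac i₀ hi₀T).1
        have : q' i₀ = c := by
          rw [hq'_def]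
          simp only [hr0_def, hiS, if_neg, not_false_iff, mul_zero, sub_zero, h1ml]
          rw [hc_def]
          field_simp
        rw [this] at hr; exact absurd hr (lt_irrefl c)
    have hT'lt : T'.card < T.card :=
      Finset.card_lt_card (Finset.ssubset_iff_of_subset hT'sub |>.mpr ⟨i₀, hi₀T, hi₀T'⟩)
    -- T.card ≥ 2
    have hT2 : 2 ≤ T.card := by
      rcases Nat.lt_or_ge T.card 2 with h | h
      · exfalso
        interval_cases h' : T.card
        · exact hTe (Finset.card_eq_zero.mp h')
        · obtain ⟨i, hi⟩ := Finset.card_eq_one.mp h'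
          have hiT : i ∈ T := by rw [hi]; exact Finset.mem_singleton_self i
          have hsum : ∑ j ∈ T, q j = q i := by rw [hi, Finset.sum_singleton]
          have hqi : q i < c := (hTfrac i hiT).2
          have hfd' : (Fl.card : ℝ) + 1 ≤ d := by exact_mod_cast hfd
          nlinarith [hsplit, hcd]
      · exact h
    -- apply IH
    obtain ⟨m', hm', p', r', hp'0, hp'1, hr'c, hq'eq⟩ :=
      IH T'.card (by omega) q' rfl h0' h1' h2'
    refine ⟨m' + 1, by omega, Fin.cons lam (fun j => (1 - lam) * p' j),
      Fin.cons r0 r', ?_, ?_, ?_, ?_⟩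
    · intro j
      refine Fin.cases ?_ ?_ j
      · exact hlampos.le
      · intro j'; exact mul_nonneg h1lam.le (hp'0 j')
    · rw [Fin.sum_cons, ← Finset.mul_sum, hp'1, mul_one]; ring
    · intro j
      refine Fin.cases ?_ ?_ j
      · exact ⟨S, hScard, fun i => rfl⟩
      · intro j'; exact hr'c j'
    · funext i
      rw [Finset.sum_apply]
      rw [Fin.sum_univ_succ]
      simp only [Fin.cons_zero, Fin.cons_succ, Pi.smul_apply, smul_eq_mul]
      have h2s : ∑ j : Fin m', ((1 - lam) * p' j) * r' j i = (1 - lam) * q' i := by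
        rw [hq'eq, Finset.sum_apply]
        simp only [Pi.smul_apply, smul_eq_mul]
        rw [Finset.mul_sum]
        exact Finset.sum_congr rfl (fun j _ => by ring)
      rw [h2s]
      have hq'i : q' i = (q i - lam * r0 i) / (1 - lam) := rfl
      rw [hq'i]
      have hne : (1:ℝ) - lam ≠ 0 := ne_of_gt h1lam
      field_simp
      ring

theorem stmt_18 (n k : ℕ) (hk1 : 1 ≤ k) (hkn : k < n)
    (W : Matrix (Fin n) (Fin n) ℝ) (hW : W.IsHermitian)
    (hpsd : W.PosSemidef) (htr : W.trace = 1)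
    (heig : ∀ i, hW.eigenvalues i ≤ 1 / ((n - k : ℕ) : ℝ)) :
    ((∀ i, 0 ≤ hW.eigenvalues i) ∧ (∑ i, hW.eigenvalues i = 1) ∧
        ∀ i, hW.eigenvalues i ≤ 1 / ((n - k : ℕ) : ℝ)) ∧
      ∀ q : Fin n → ℝ,
        ((∀ i, 0 ≤ q i) ∧ (∑ i, q i = 1) ∧ ∀ i, q i ≤ 1 / ((n - k : ℕ) : ℝ)) →
        ∃ m : ℕ, m ≤ n ∧ ∃ (p : Fin m → ℝ) (r : Fin m → Fin n → ℝ),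
          (∀ j, 0 ≤ p j) ∧ (∑ j, p j = 1) ∧
          (∀ j, ∃ S : Finset (Fin n), S.card = n - k ∧
            ∀ i, r j i = if i ∈ S then 1 / ((n - k : ℕ) : ℝ) else 0) ∧
          q = ∑ j, p j • r j := by
  constructor
  · refine ⟨fun i => hpsd.eigenvalues_nonneg i, ?_, heig⟩
    have h := congrArg Matrix.trace hW.spectral_theorem
    rw [htr, Unitary.conjStarAlgAut_apply, Matrix.trace_mul_cycle, Unitary.coe_star_mul_self, Matrix.one_mul,
      Matrix.trace_diagonal] at h
    simpa using h.symm
  · intro q ⟨hq0, hq1, hq2⟩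
    have hd : 0 < n - k := by omega
    obtain ⟨m, hm, p, r, hp0, hp1, hrc, hqe⟩ :=
      capped_key n (n - k) hd
        (Finset.univ.filter (fun i => 0 < q i ∧ q i < 1 / ((n - k : ℕ) : ℝ))).card
        q rfl hq0 hq1 hq2
    refine ⟨m, ?_, p, r, hp0, hp1, hrc, hqe⟩
    have hcard : (Finset.univ.filter
        (fun i => 0 < q i ∧ q i < 1 / ((n - k : ℕ) : ℝ))).card ≤ n := by
      calc (Finset.univ.filter
          (fun i => 0 < q i ∧ q i < 1 / ((n - k : ℕ) : ℝ))).card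
          ≤ (Finset.univ : Finset (Fin n)).card := Finset.card_le_univ _
        _ = n := by simp
    omega
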